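/- Let θ : Ω → Ω, let T_ω : M → M be measurable maps with iterates T_ω^n = T_{θ^{n−1}ω} ∘ ⋯ ∘ T_ω, and let μ^ω be probability measures on M satisfying the equivariance T_ω^*μ^ω = μ^{θω}. For a measurable set B ⊂ M define τ^ω_B(x) = inf{j ≥ 1 : T_ω^j x ∈ B} and ε_ω(B) = sup_{k ≥ 1} |μ^ω(τ^ω_B > k)·μ^ω(B) − μ^ω(B ∩ {τ^ω_B > k})|. Then for every N ≥ 1: |μ^ω(τ^ω_B > N) − ∏_{j=1}^N (1 − μ^{θ^jω}(B))| ≤ Σ_{j=1}^N ε_{θ^jω}(B) ∏_{k=1}^{j−1} (1 − μ^{θ^kω}(B)). -/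

import Mathlib

open MeasureTheory Filter Metric Set

noncomputable section

/-- Iterates of the random maps: `iterT θ T n ω = T_{θ^{n-1}ω} ∘ ⋯ ∘ T_{θω} ∘ T_ω`. -/
def iterT {Ω M : Type*} (θ : Ω → Ω) (T : Ω → M → M) : ℕ → Ω → M → M
  | 0 => fun _ => id
  | n + 1 => fun ω => iterT θ T n (θ ω) ∘ T ω

/-- The event `{τ^ω_B > k}`: no entry to `B` at the times `1, …, k`. -/
def tauGT {Ω M : Type*} (θ : Ω → Ω) (T : Ω → M → M) (ω : Ω) (B : Set M) (k : ℕ) :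
    Set M :=
  {x | ∀ j : ℕ, 1 ≤ j → j ≤ k → iterT θ T j ω x ∉ B}

/-- The mixing-error quantity
`ε_ω(B) = sup_{k ≥ 1} |μ^ω(τ^ω_B > k)·μ^ω(B) − μ^ω(B ∩ {τ^ω_B > k})|`. -/
def epsErr {Ω M : Type*} [MeasurableSpace M] (θ : Ω → Ω) (T : Ω → M → M)
    (μω : Ω → Measure M) (ω : Ω) (B : Set M) : ℝ :=
  ⨆ k : ℕ, |(μω ω (tauGT θ T ω B (k + 1))).toReal * (μω ω B).toReal
    - (μω ω (B ∩ tauGT θ T ω B (k + 1))).toReal|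

section Aux

variable {Ω M : Type*} [MeasurableSpace M] (θ : Ω → Ω) (T : Ω → M → M)

lemma measurable_iterT (hT : ∀ ω, Measurable (T ω)) (n : ℕ) :
    ∀ ω : Ω, Measurable (iterT θ T n ω) := by
  induction n with
  | zero => intro ω; exact measurable_id
  | succ n ih => intro ω; exact (ih (θ ω)).comp (hT ω)

lemma tauGT_zero (ω : Ω) (B : Set M) : tauGT θ T ω B 0 = Set.univ := by
  ext x
  constructor
  · intro _; trivial
  · intro _ j hj hj0; omega

lemma tauGT_eq_iInter (ω : Ω) (B : Set M) (k : ℕ) :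
    tauGT θ T ω B k = ⋂ j ∈ Finset.Icc 1 k, (iterT θ T j ω) ⁻¹' Bᶜ := by
  ext x
  simp only [tauGT, Set.mem_setOf_eq, Set.mem_iInter, Finset.mem_Icc, Set.mem_preimage,
    Set.mem_compl_iff, and_imp]
  try tauto

lemma measurableSet_tauGT (hT : ∀ ω, Measurable (T ω)) (ω : Ω) {B : Set M}
    (hB : MeasurableSet B) (k : ℕ) : MeasurableSet (tauGT θ T ω B k) := by
  rw [tauGT_eq_iInter]
  exact Finset.measurableSet_biInter _ fun j _ => (measurable_iterT θ T hT j ω) hB.compl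

lemma tauGT_succ (ω : Ω) (B : Set M) (k : ℕ) :
    tauGT θ T ω B (k + 1) = T ω ⁻¹' (tauGT θ T (θ ω) B k \ B) := by
  ext x
  simp only [tauGT, Set.mem_setOf_eq, Set.mem_preimage, Set.mem_diff]
  constructor
  · intro h
    refine ⟨fun j hj hjk => ?_, h 1 le_rfl (by omega)⟩
    exact h (j + 1) (by omega) (by omega)
  · rintro ⟨h1, h2⟩ j hj hjk
    rcases j with _ | j
    · omega
    rcases j with _ | j
    · exact h2
    · exact h1 (j + 1) (by omega) (by omega)

lemma measure_tauGT_succ (hT : ∀ ω, Measurable (T ω)) (μω : Ω → Measure M)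
    (hequiv : ∀ ω, Measure.map (T ω) (μω ω) = μω (θ ω)) (ω : Ω) {B : Set M}
    (hB : MeasurableSet B) (k : ℕ) :
    μω ω (tauGT θ T ω B (k + 1)) = μω (θ ω) (tauGT θ T (θ ω) B k \ B) := by
  rw [tauGT_succ, ← hequiv ω,
    Measure.map_apply (hT ω) ((measurableSet_tauGT θ T hT (θ ω) hB k).diff hB)]

end Aux

/-- **Abstract comparison of the quenched hitting-time distribution with the product
`∏_{j=1}^N (1 − μ^{θ^jω}(B))`**, with error controlled by the quantities
`ε_{θ^jω}(B)`. -/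
theorem hitting_time_product_comparison_abstract
    {Ω : Type*} {M : Type*} [MeasurableSpace M]
    (θ : Ω → Ω) (T : Ω → M → M) (hTmeas : ∀ ω, Measurable (T ω))
    (μω : Ω → Measure M) (hprob : ∀ ω, IsProbabilityMeasure (μω ω))
    (hequiv : ∀ ω, Measure.map (T ω) (μω ω) = μω (θ ω))
    (ω : Ω) (B : Set M) (hB : MeasurableSet B) :
    ∀ N : ℕ, 1 ≤ N →
      |(μω ω (tauGT θ T ω B N)).toReal
          - ∏ j ∈ Finset.Icc 1 N, (1 - (μω (θ^[j] ω) B).toReal)|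
        ≤ ∑ j ∈ Finset.Icc 1 N, epsErr θ T μω (θ^[j] ω) B *
            ∏ k ∈ Finset.Icc 1 (j - 1), (1 - (μω (θ^[k] ω) B).toReal) := by
  -- basic bounds on toReal of measures
  have htr1 : ∀ (ω' : Ω) (s : Set M), (μω ω' s).toReal ≤ 1 := by
    intro ω' s
    have h := prob_le_one (μ := μω ω') (s := s)
    simpa using ENNReal.toReal_mono ENNReal.one_ne_top h
  have htr0 : ∀ (ω' : Ω) (s : Set M), 0 ≤ (μω ω' s).toReal := fun _ _ => ENNReal.toReal_nonneg
  -- bddAbove of the range defining epsErr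
  have hbdd : ∀ ω' : Ω, BddAbove (Set.range fun k : ℕ =>
      |(μω ω' (tauGT θ T ω' B (k + 1))).toReal * (μω ω' B).toReal
        - (μω ω' (B ∩ tauGT θ T ω' B (k + 1))).toReal|) := by
    intro ω'
    refine ⟨1, ?_⟩
    rintro x ⟨k, rfl⟩
    have h1 := htr1 ω' (tauGT θ T ω' B (k + 1))
    have h2 := htr1 ω' B
    have h3 := htr1 ω' (B ∩ tauGT θ T ω' B (k + 1))
    have h4 := htr0 ω' (tauGT θ T ω' B (k + 1))
    have h5 := htr0 ω' B
    have h6 := htr0 ω' (B ∩ tauGT θ T ω' B (k + 1))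
    rw [abs_le]
    constructor <;> nlinarith
  have heps_nonneg : ∀ ω' : Ω, 0 ≤ epsErr θ T μω ω' B := by
    intro ω'
    exact le_trans (abs_nonneg _) (le_ciSup (hbdd ω') 0)
  -- the real-valued recursion
  have hrec : ∀ (ω' : Ω) (k : ℕ),
      (μω ω' (tauGT θ T ω' B (k + 1))).toReal
        = (μω (θ ω') (tauGT θ T (θ ω') B k)).toReal * (1 - (μω (θ (ω')) B).toReal)
          + ((μω (θ ω') (tauGT θ T (θ ω') B k)).toReal * (μω (θ ω') B).toReal
            - (μω (θ ω') (B ∩ tauGT θ T (θ ω') B k)).toReal) := by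
    intro ω' k
    rw [measure_tauGT_succ θ T hTmeas μω hequiv ω' hB k]
    have hsub : tauGT θ T (θ ω') B k \ B = tauGT θ T (θ ω') B k \ (B ∩ tauGT θ T (θ ω') B k) := by
      ext x; simp [Set.mem_diff]; try tauto
    have hmeas : MeasurableSet (B ∩ tauGT θ T (θ ω') B k) :=
      hB.inter (measurableSet_tauGT θ T hTmeas (θ ω') hB k)
    have hfin : μω (θ ω') (B ∩ tauGT θ T (θ ω') B k) ≠ ⊤ := measure_ne_top _ _
    have hle : μω (θ ω') (B ∩ tauGT θ T (θ ω') B k) ≤ μω (θ ω') (tauGT θ T (θ ω') B k) :=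
      measure_mono Set.inter_subset_right
    rw [hsub, measure_diff Set.inter_subset_right hmeas.nullMeasurableSet hfin,
      ENNReal.toReal_sub_of_le hle (measure_ne_top _ _)]
    ring
  -- the error bound
  have herr : ∀ (ω' : Ω) (k : ℕ),
      |(μω ω' (tauGT θ T ω' B k)).toReal * (μω ω' B).toReal
        - (μω ω' (B ∩ tauGT θ T ω' B k)).toReal| ≤ epsErr θ T μω ω' B := by
    intro ω' k
    rcases k with _ | k
    · rw [tauGT_zero]
      have : (μω ω' Set.univ).toReal = 1 := by
        simp [measure_univ]
      rw [Set.inter_univ, this, one_mul, sub_self, abs_zero]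
      exact heps_nonneg ω'
    · exact le_ciSup (hbdd ω') k
  -- main induction, in `range` form
  have main : ∀ N : ℕ, ∀ ω : Ω,
      |(μω ω (tauGT θ T ω B N)).toReal
          - ∏ i ∈ Finset.range N, (1 - (μω (θ^[i + 1] ω) B).toReal)|
        ≤ ∑ i ∈ Finset.range N, epsErr θ T μω (θ^[i + 1] ω) B *
            ∏ k ∈ Finset.range i, (1 - (μω (θ^[k + 1] ω) B).toReal) := by
    intro N
    induction N with
    | zero =>
      intro ω
      simp [tauGT_zero]
    | succ N ih =>
      intro ω
      have hiter : ∀ i : ℕ, θ^[i + 1 + 1] ω = θ^[i + 1] (θ ω) :=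
        fun i => Function.iterate_succ_apply θ (i + 1) ω
      set b := (μω (θ ω) B).toReal with hbdef
      have hb0 : 0 ≤ b := htr0 _ _
      have hb1 : b ≤ 1 := htr1 _ _
      -- product identity
      have hP : ∏ i ∈ Finset.range (N + 1), (1 - (μω (θ^[i + 1] ω) B).toReal)
          = (∏ i ∈ Finset.range N, (1 - (μω (θ^[i + 1] (θ ω)) B).toReal)) * (1 - b) := by
        rw [Finset.prod_range_succ']
        rfl
      -- sum identity
      have hE : ∑ i ∈ Finset.range (N + 1), epsErr θ T μω (θ^[i + 1] ω) B *
            ∏ k ∈ Finset.range i, (1 - (μω (θ^[k + 1] ω) B).toReal)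
          = (1 - b) * (∑ i ∈ Finset.range N, epsErr θ T μω (θ^[i + 1] (θ ω)) B *
            ∏ k ∈ Finset.range i, (1 - (μω (θ^[k + 1] (θ ω)) B).toReal))
            + epsErr θ T μω (θ ω) B := by
        rw [Finset.sum_range_succ']
        congr 1
        · rw [Finset.mul_sum]
          refine Finset.sum_congr rfl fun i _ => ?_
          rw [Finset.prod_range_succ', hiter i]
          have hprodeq : ∏ k ∈ Finset.range i, (1 - (μω (θ^[k + 1 + 1] ω) B).toReal)
              = ∏ k ∈ Finset.range i, (1 - (μω (θ^[k + 1] (θ ω)) B).toReal) :=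
            Finset.prod_congr rfl fun k _ => by rw [hiter k]
          rw [hprodeq]
          have h0 : (1 : ℝ) - (μω (θ^[0 + 1] ω) B).toReal = 1 - b := by simp [hbdef]
          rw [h0]
          ring
        all_goals simp
      have hrec' := hrec ω N
      set aN := (μω (θ ω) (tauGT θ T (θ ω) B N)).toReal with haN
      set errN := aN * (μω (θ ω) B).toReal - (μω (θ ω) (B ∩ tauGT θ T (θ ω) B N)).toReal
        with herrN
      have herrbd : |errN| ≤ epsErr θ T μω (θ ω) B := herr (θ ω) N
      have ihθ := ih (θ ω)
      set P := ∏ i ∈ Finset.range N, (1 - (μω (θ^[i + 1] (θ ω)) B).toReal) with hPdef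
      set E := ∑ i ∈ Finset.range N, epsErr θ T μω (θ^[i + 1] (θ ω)) B *
        ∏ k ∈ Finset.range i, (1 - (μω (θ^[k + 1] (θ ω)) B).toReal) with hEdef
      rw [hP, hE, hrec']
      have hstep : |(aN * (1 - b) + errN) - P * (1 - b)|
          ≤ (1 - b) * |aN - P| + |errN| := by
        have : (aN * (1 - b) + errN) - P * (1 - b) = (1 - b) * (aN - P) + errN := by ring
        rw [this]
        refine (abs_add_le _ _).trans ?_
        rw [abs_mul, abs_of_nonneg (by linarith)]
      refine hstep.trans ?_
      have h1 : (1 - b) * |aN - P| ≤ (1 - b) * E :=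
        mul_le_mul_of_nonneg_left ihθ (by linarith)
      linarith
  -- convert the `Icc` statement to the `range` statement
  intro N _
  have e1 : ∏ j ∈ Finset.Icc 1 N, (1 - (μω (θ^[j] ω) B).toReal)
      = ∏ i ∈ Finset.range N, (1 - (μω (θ^[i + 1] ω) B).toReal) := by
    rw [← Finset.Ico_add_one_right_eq_Icc, Finset.prod_Ico_eq_prod_range]
    refine Finset.prod_congr (by simp) fun i _ => by rw [add_comm]
  have e2 : ∑ j ∈ Finset.Icc 1 N, epsErr θ T μω (θ^[j] ω) B *
        ∏ k ∈ Finset.Icc 1 (j - 1), (1 - (μω (θ^[k] ω) B).toReal)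
      = ∑ i ∈ Finset.range N, epsErr θ T μω (θ^[i + 1] ω) B *
        ∏ k ∈ Finset.range i, (1 - (μω (θ^[k + 1] ω) B).toReal) := by
    rw [← Finset.Ico_add_one_right_eq_Icc, Finset.sum_Ico_eq_sum_range]
    refine Finset.sum_congr (by simp) fun i _ => ?_
    have h1 : 1 + i - 1 = i := by omega
    rw [h1, add_comm 1 i]
    congr 1
    rw [← Finset.Ico_add_one_right_eq_Icc, Finset.prod_Ico_eq_prod_range, Nat.add_sub_cancel]
    exact Finset.prod_congr rfl fun k _ => by rw [add_comm]
  rw [e1, e2]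
  exact main N ω
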